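/- For N ≥ 1, the terminating hypergeometric identity ₂F₁(-N+1, N; 2N; 1-z) = [(N)_{N-1} / (2N)_{N-1}] · ₂F₁(-N+1, N; -2N+2; z) holds as an identity of polynomials in z, where (a)_k denotes the Pochhammer symbol. -/

import Mathlib

open Finset Polynomial

noncomputable def pch (k : ℕ) (x : ℚ) : ℚ := (ascPochhammer ℚ k).eval x

lemma pch_zero (x : ℚ) : pch 0 x = 1 := by simp [pch]

lemma pch_succ (k : ℕ) (x : ℚ) : pch (k+1) x = pch k x * (x + k) :=
  ascPochhammer_succ_eval k x

lemma pch_succ_left (k : ℕ) (x : ℚ) : pch (k+1) x = x * pch k (x+1) := by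
  simp [pch, ascPochhammer_succ_left, eval_comp]

lemma pch_add (a b : ℕ) (x : ℚ) : pch (a+b) x = pch a x * pch b (x + a) := by
  rw [pch, ← ascPochhammer_mul]
  simp [eval_comp]
  rfl

lemma pch_pos (k : ℕ) (x : ℚ) (hx : 0 < x) : 0 < pch k x := ascPochhammer_pos k x hx

lemma vandermonde_pch (M : ℕ) (a c : ℚ) :
    ∑ m ∈ range (M+1), (-1:ℚ)^m * (M.choose m) * pch m a * pch (M-m) (c+m)
      = pch M (c-a) := by
  induction M generalizing a c with
  | zero => simp [pch_zero]
  | succ M ih =>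
    rw [Finset.sum_range_succ' _ (M+1)]
    simp only [Nat.choose_zero_right, Nat.cast_one, pow_zero, one_mul, pch_zero,
      Nat.cast_zero, add_zero, Nat.sub_zero, mul_one]
    have hsplit : ∀ m ∈ range (M+1),
        (-1:ℚ)^(m+1) * ((M+1).choose (m+1)) * pch (m+1) a * pch (M+1-(m+1)) (c+((m+1:ℕ):ℚ))
        = (-1:ℚ)^(m+1) * ((M).choose (m+1)) * pch (m+1) a * pch (M-m) (c+((m+1:ℕ):ℚ))
          + (-a) * ((-1:ℚ)^m * ((M).choose m) * pch m (a+1) * pch (M-m) ((c+1)+m)) := by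
      intro m hm
      rw [Nat.choose_succ_succ' M m]
      have h1 : pch (m+1) a = a * pch m (a+1) := pch_succ_left m a
      have h2 : c + ((m:ℚ)+1) = (c+1)+m := by ring
      push_cast
      rw [h1, h2]
      ring_nf
    rw [Finset.sum_congr rfl hsplit, Finset.sum_add_distrib, ← Finset.mul_sum,
      ih (a+1) (c+1)]
    have hc : (c+1) - (a+1) = c - a := by ring
    rw [hc]
    have key : (∑ m ∈ range (M+1),
        (-1:ℚ)^(m+1) * ((M).choose (m+1)) * pch (m+1) a * pch (M-m) (c+((m+1:ℕ):ℚ)))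
        + pch (M+1) c
        = (c + M) * pch M (c - a) := by
      have hmerge := Finset.sum_range_succ'
        (fun m => (-1:ℚ)^m * ((M).choose m) * pch m a * pch ((M+1)-m) (c+m)) (M+1)
      simp only [Nat.choose_zero_right, Nat.cast_one, pow_zero, one_mul, pch_zero,
        Nat.cast_zero, add_zero, Nat.sub_zero, mul_one] at hmerge
      have hMm : ∀ m ∈ range (M+1), (M+1)-(m+1) = M - m := fun m hm => by omega
      rw [show (∑ m ∈ range (M+1),
          (-1:ℚ)^(m+1) * ((M).choose (m+1)) * pch (m+1) a * pch (M-m) (c+((m+1:ℕ):ℚ)))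
          = ∑ m ∈ range (M+1),
          (-1:ℚ)^(m+1) * ((M).choose (m+1)) * pch (m+1) a * pch ((M+1)-(m+1)) (c+((m+1:ℕ):ℚ))
        from Finset.sum_congr rfl (fun m hm => by rw [hMm m hm]), ← hmerge,
        Finset.sum_range_succ]
      have hz : ((-1:ℚ)^(M+1) * ((M).choose (M+1)) * pch (M+1) a * pch ((M+1)-(M+1)) (c+((M+1:ℕ):ℚ))) = 0 := by
        simp [Nat.choose_succ_self]
      rw [hz, add_zero]
      have hterm : ∀ m ∈ range (M+1),
          (-1:ℚ)^m * ((M).choose m) * pch m a * pch ((M+1)-m) (c+m)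
          = (c + M) * ((-1:ℚ)^m * ((M).choose m) * pch m a * pch (M-m) (c+m)) := by
        intro m hm
        have hmM : m ≤ M := Nat.lt_succ_iff.mp (Finset.mem_range.mp hm)
        have h3 : (M+1) - m = (M-m) + 1 := by omega
        rw [h3, pch_succ]
        have h4 : ((c:ℚ) + m + ((M - m : ℕ) : ℚ)) = c + M := by
          push_cast [Nat.cast_sub hmM]; ring
        rw [h4]; ring
      rw [Finset.sum_congr rfl hterm, ← Finset.mul_sum, ih a c]
    rw [show pch (M+1) (c-a) = pch M (c-a) * ((c-a)+M) from pch_succ M (c-a)]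
    linear_combination key

lemma pch_nat (k n : ℕ) : pch k (n : ℚ) = (n.ascFactorial k : ℚ) := by
  rw [pch, ← ascPochhammer_eval_cast, ascPochhammer_nat_eq_ascFactorial]

lemma pch_neg_nat (k n : ℕ) : pch k (-(n:ℚ)) = (-1:ℚ)^k * (n.descFactorial k : ℚ) := by
  rw [pch, ascPochhammer_eval_neg_eq_descPochhammer, descPochhammer_eval_eq_descFactorial]

theorem terminating_2F1_transformation (N : ℕ) (hN : 1 ≤ N) (z : ℚ) :
    ∑ k ∈ Finset.range N,
      ((ascPochhammer ℚ k).eval (1 - (N : ℚ)) * (ascPochhammer ℚ k).eval (N : ℚ) /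
        ((ascPochhammer ℚ k).eval (2 * (N : ℚ)) * (k.factorial : ℚ))) * (1 - z) ^ k =
    ((ascPochhammer ℚ (N - 1)).eval (N : ℚ) / (ascPochhammer ℚ (N - 1)).eval (2 * (N : ℚ))) *
    ∑ k ∈ Finset.range N,
      ((ascPochhammer ℚ k).eval (1 - (N : ℚ)) * (ascPochhammer ℚ k).eval (N : ℚ) /
        ((ascPochhammer ℚ k).eval (2 - 2 * (N : ℚ)) * (k.factorial : ℚ))) * z ^ k := by
  show ∑ k ∈ Finset.range N,
      (pch k (1 - (N : ℚ)) * pch k (N : ℚ) / (pch k (2 * (N : ℚ)) * (k.factorial : ℚ))) * (1 - z) ^ k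
    = (pch (N-1) (N : ℚ) / pch (N-1) (2 * (N : ℚ))) *
      ∑ k ∈ Finset.range N,
      (pch k (1 - (N : ℚ)) * pch k (N : ℚ) / (pch k (2 - 2 * (N : ℚ)) * (k.factorial : ℚ))) * z ^ k
  set A : ℕ → ℚ := fun k =>
    pch k (1 - (N : ℚ)) * pch k (N : ℚ) / (pch k (2 * (N : ℚ)) * (k.factorial : ℚ)) with hA
  set g : ℕ → ℕ → ℚ := fun k j => A k * ((k.choose j : ℚ) * ((-1)^j * z^j)) with hg
  -- Step A: expand (1 - z)^k
  have stepA : ∑ k ∈ Finset.range N, A k * (1 - z) ^ k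
      = ∑ k ∈ Finset.range N, ∑ j ∈ Finset.range (k+1), g k j := by
    refine Finset.sum_congr rfl fun k _ => ?_
    rw [sub_eq_add_neg, add_comm, add_pow, Finset.mul_sum]
    exact Finset.sum_congr rfl fun j _ => by simp only [hg]; ring
  -- Step B: swap the order of summation
  have stepB : ∑ k ∈ Finset.range N, ∑ j ∈ Finset.range (k+1), g k j
      = ∑ j ∈ Finset.range N, ∑ k ∈ Finset.Ico j N, g k j := by
    simp only [Finset.range_eq_Ico]
    exact (Finset.sum_Ico_Ico_comm 0 N (fun i j => g j i)).symm
  rw [stepA, stepB, Finset.mul_sum]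
  refine Finset.sum_congr rfl fun j hj => ?_
  have hjN : j < N := Finset.mem_range.mp hj
  set M := N - 1 - j with hM
  have hNj : N - j = M + 1 := by omega
  rw [Finset.sum_Ico_eq_sum_range, hNj]
  have h2N : (0:ℚ) < 2 * (N:ℚ) := by positivity
  have hpch2N : ∀ k : ℕ, pch k (2*(N:ℚ)) ≠ 0 := fun k => ne_of_gt (pch_pos k _ h2N)
  have hpchup : ∀ k : ℕ, ∀ r : ℕ, pch k (2*(N:ℚ) + r) ≠ 0 := fun k r =>
    ne_of_gt (pch_pos k _ (by positivity))
  have claim : ∀ m ∈ Finset.range (M+1), g (j+m) j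
      = (((N-1).factorial : ℚ) * pch j (N:ℚ) /
          ((j.factorial : ℚ) * (M.factorial : ℚ) * pch (N-1) (2*(N:ℚ))) * z^j)
        * ((-1:ℚ)^m * (M.choose m : ℚ) * pch m ((N:ℚ)+j) * pch (M-m) ((2*(N:ℚ)+j)+m)) := by
    intro m hm
    have hmM : m ≤ M := Nat.lt_succ_iff.mp (Finset.mem_range.mp hm)
    have hjm : j + m ≤ N - 1 := by omega
    have r1 : pch (j+m) (1-(N:ℚ)) = (-1:ℚ)^(j+m) * ((N-1).descFactorial (j+m) : ℚ) := by
      have harg : (1 - (N:ℚ)) = -(((N-1:ℕ)):ℚ) := by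
        push_cast [Nat.cast_sub hN]; ring
      rw [harg, pch_neg_nat]
    have r2 : pch (j+m) (N:ℚ) = pch j (N:ℚ) * pch m ((N:ℚ)+j) := pch_add j m (N:ℚ)
    have r3 : pch (N-1) (2*(N:ℚ)) = pch (j+m) (2*(N:ℚ)) * pch (M-m) (2*(N:ℚ)+(j:ℚ)+(m:ℚ)) := by
      have h : N-1 = (j+m) + (M-m) := by omega
      rw [h, pch_add]
      congr 1
      push_cast; ring
    have e1 : ((N-1).descFactorial (j+m) : ℚ) * (((M-m).factorial : ℚ)) = ((N-1).factorial : ℚ) := by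
      have := Nat.factorial_mul_descFactorial hjm
      have hsub : N - 1 - (j+m) = M - m := by omega
      rw [hsub] at this
      rw [mul_comm]
      exact_mod_cast this
    have e2 : (((j+m).choose j : ℚ)) * (m.factorial : ℚ) * (j.factorial : ℚ) = ((j+m).factorial : ℚ) := by
      have := Nat.add_choose_mul_factorial_mul_factorial m j
      rw [Nat.add_comm m j] at this
      exact_mod_cast this
    have e3 : ((M.choose m : ℚ)) * (m.factorial : ℚ) * ((M-m).factorial : ℚ) = (M.factorial : ℚ) :=
      mod_cast congrArg (Nat.cast : ℕ → ℚ) (Nat.choose_mul_factorial_mul_factorial hmM)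
    have hs : ((-1:ℚ))^(j+m) * (-1)^j = (-1)^m := by
      rw [pow_add, mul_right_comm, ← pow_add, ← two_mul, pow_mul]
      norm_num
    have harg2 : (2*(N:ℚ)+(j:ℚ))+(m:ℚ) = 2*(N:ℚ)+(j:ℚ)+(m:ℚ) := by ring
    simp only [hg, hA]
    rw [r1, r2, r3, harg2]
    have h4 : pch (M-m) (2*(N:ℚ)+(j:ℚ)+(m:ℚ)) ≠ 0 := by
      have := hpchup (M-m) (j+m)
      rwa [show ((j+m:ℕ):ℚ) = (j:ℚ)+(m:ℚ) by push_cast; ring, ← add_assoc] at this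
    have hD1 : pch (j+m) (2*(N:ℚ)) * ((j+m).factorial : ℚ) ≠ 0 :=
      mul_ne_zero (hpch2N _) (by exact_mod_cast (j+m).factorial_ne_zero)
    have hD2 : (j.factorial : ℚ) * (M.factorial : ℚ) *
        (pch (j+m) (2*(N:ℚ)) * pch (M-m) (2*(N:ℚ)+(j:ℚ)+(m:ℚ))) ≠ 0 := by
      refine mul_ne_zero (mul_ne_zero ?_ ?_) (mul_ne_zero (hpch2N _) h4) <;>
        exact_mod_cast Nat.factorial_ne_zero _
    have h4' : pch (M-m) ((N:ℚ)*2+(j:ℚ)+(m:ℚ)) ≠ 0 := by rwa [mul_comm] at h4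
    have h5' : pch (j+m) ((N:ℚ)*2) ≠ 0 := by rw [mul_comm]; exact hpch2N _
    field_simp
    linear_combination
      (pch j (N:ℚ) * pch m ((N:ℚ)+(j:ℚ)) * z^j * ((N-1).descFactorial (j+m) : ℚ) *
        ((j+m).choose j : ℚ) * (j.factorial:ℚ) * (M.factorial:ℚ)) * hs
      + ((-1:ℚ)^m * pch j (N:ℚ) * pch m ((N:ℚ)+(j:ℚ)) * z^j) *
        ((M.choose m : ℚ) * ((j+m).choose j : ℚ) * (m.factorial:ℚ) * (j.factorial:ℚ) * e1
          + (M.choose m : ℚ) * ((N-1).factorial:ℚ) * e2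
          - ((N-1).descFactorial (j+m):ℚ) * ((j+m).choose j:ℚ) * (j.factorial:ℚ) * e3)
  rw [Finset.sum_congr rfl claim, ← Finset.mul_sum,
    vandermonde_pch M ((N:ℚ)+(j:ℚ)) (2*(N:ℚ)+(j:ℚ)),
    show 2*(N:ℚ)+(j:ℚ) - ((N:ℚ)+(j:ℚ)) = (N:ℚ) by ring]
  -- final coefficient identity
  have hj2N : j ≤ 2*N-2 := by omega
  have q1 : pch j (1-(N:ℚ)) = (-1:ℚ)^j * ((N-1).descFactorial j : ℚ) := by
    rw [show (1 - (N:ℚ)) = -(((N-1:ℕ)):ℚ) by push_cast [Nat.cast_sub hN]; ring, pch_neg_nat]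
  have q2 : pch j (2-2*(N:ℚ)) = (-1:ℚ)^j * ((2*N-2).descFactorial j : ℚ) := by
    rw [show (2 - 2*(N:ℚ)) = -(((2*N-2:ℕ)):ℚ) by
      push_cast [Nat.cast_sub (show 2 ≤ 2*N by omega)]; ring, pch_neg_nat]
  have q3 : pch M (N:ℚ) = (N.ascFactorial M : ℚ) := pch_nat M N
  have q4 : pch (N-1) (N:ℚ) = (N.ascFactorial (N-1) : ℚ) := pch_nat (N-1) N
  have f1 : ((N-1).factorial:ℚ) * (N.ascFactorial M : ℚ) = ((2*N-2-j).factorial : ℚ) := by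
    have := Nat.factorial_mul_ascFactorial (N-1) M
    rw [show N-1+1 = N by omega, show N-1+M = 2*N-2-j by omega] at this
    exact_mod_cast this
  have f2 : ((2*N-2).descFactorial j : ℚ) * ((2*N-2-j).factorial:ℚ) = ((2*N-2).factorial : ℚ) := by
    have := Nat.factorial_mul_descFactorial hj2N
    rw [mul_comm] at this
    exact_mod_cast this
  have f3 : ((N-1).descFactorial j : ℚ) * (M.factorial : ℚ) = ((N-1).factorial : ℚ) := by
    have := Nat.factorial_mul_descFactorial (show j ≤ N-1 by omega)
    rw [mul_comm, show N-1-j = M from rfl] at this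
    exact_mod_cast this
  have f4 : (N.ascFactorial (N-1) : ℚ) * ((N-1).factorial:ℚ) = ((2*N-2).factorial:ℚ) := by
    have := Nat.factorial_mul_ascFactorial (N-1) (N-1)
    rw [show N-1+1 = N by omega, show N-1+(N-1) = 2*N-2 by omega, mul_comm] at this
    exact_mod_cast this
  have hkey : ((N-1).factorial:ℚ) * (N.ascFactorial M : ℚ) * ((2*N-2).descFactorial j : ℚ)
      = (N.ascFactorial (N-1) : ℚ) * (((N-1).descFactorial j : ℚ) * (M.factorial : ℚ)) := by
    linear_combination ((2*N-2).descFactorial j : ℚ) * f1 + f2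
      - (N.ascFactorial (N-1) : ℚ) * f3 - f4
  have hd'' : ((2*N-2).descFactorial j : ℚ) ≠ 0 := by
    have : (2*N-2).descFactorial j ≠ 0 := fun h =>
      absurd (Nat.descFactorial_eq_zero_iff_lt.mp h) (by omega)
    exact_mod_cast this
  have hfj : (j.factorial : ℚ) ≠ 0 := by exact_mod_cast j.factorial_ne_zero
  have hfM : (M.factorial : ℚ) ≠ 0 := by exact_mod_cast M.factorial_ne_zero
  have hP2 : pch (N-1) (2*(N:ℚ)) ≠ 0 := hpch2N _
  have hneg : ((-1:ℚ))^j ≠ 0 := by positivity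
  rw [q1, q2, q3, q4]
  field_simp
  linear_combination (pch j (N:ℚ) * z^j) * hkey
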